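/- Let (X, ‖·‖) be a real Banach space and let T : X → X be a (b, θ)-enriched contraction, i.e., there exist b ∈ [0,∞) and θ ∈ [0, b+1) such that ‖b(u−v) + Tu − Tv‖ ≤ θ‖u−v‖ for all u, v ∈ X. Then the fixed point problem for T has the limit shadowing property: for every sequence (u_n) in X with ‖u_n − T u_n‖ → 0 as n → ∞, there exists p ∈ X such that ‖Tⁿp − u_n‖ → 0 as n → ∞. -/

import Mathlib

/-- The fixed point problem of a `(b, θ)`-enriched contraction on a real Banach space
has the limit shadowing property. -/
theorem enriched_contraction_limitShadowing
    {X : Type*} [NormedAddCommGroup X] [NormedSpace ℝ X] [CompleteSpace X]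
    (T : X → X) (b θ : ℝ) (hb : 0 ≤ b) (hθ0 : 0 ≤ θ) (hθ : θ < b + 1)
    (hT : ∀ u v : X, ‖b • (u - v) + T u - T v‖ ≤ θ * ‖u - v‖) :
    ∀ u : ℕ → X,
      Filter.Tendsto (fun n => ‖u n - T (u n)‖) Filter.atTop (nhds 0) →
      ∃ p : X, Filter.Tendsto (fun n => ‖T^[n] p - u n‖) Filter.atTop (nhds 0) := by
  intro u hu
  have hb1 : (0:ℝ) < b + 1 := by linarith
  set lam : ℝ := (b + 1)⁻¹ with hlam
  have hlam0 : 0 < lam := inv_pos.mpr hb1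
  set c : ℝ := θ / (b + 1) with hc
  have hc0 : 0 ≤ c := div_nonneg hθ0 hb1.le
  have hc1 : c < 1 := (div_lt_one hb1).mpr hθ
  set f : X → X := fun x => (1 - lam) • x + lam • T x with hf
  have hkey : ∀ x y : X, f x - f y = lam • (b • (x - y) + T x - T y) := by
    intro x y
    have hbl : lam * b = 1 - lam := by
      rw [hlam, eq_sub_iff_add_eq, ← mul_add_one, inv_mul_cancel₀ hb1.ne']
    simp only [hf]
    match_scalars <;> field_simp <;> linarith [hbl]
  have hcontr : ∀ x y : X, ‖f x - f y‖ ≤ c * ‖x - y‖ := by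
    intro x y
    rw [hkey, norm_smul, Real.norm_eq_abs, abs_of_pos hlam0]
    calc lam * ‖b • (x - y) + T x - T y‖ ≤ lam * (θ * ‖x - y‖) := by
          exact mul_le_mul_of_nonneg_left (hT x y) hlam0.le
      _ = c * ‖x - y‖ := by rw [hc, hlam]; ring
  haveI : Nonempty X := ⟨0⟩
  have hlip : ContractingWith c.toNNReal f := by
    constructor
    · exact_mod_cast Real.toNNReal_lt_one.mpr hc1
    · apply LipschitzWith.of_dist_le_mul
      intro x y
      rw [dist_eq_norm, dist_eq_norm]
      calc ‖f x - f y‖ ≤ c * ‖x - y‖ := hcontr x y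
        _ = c.toNNReal * ‖x - y‖ := by rw [Real.coe_toNNReal _ hc0]
  set p := hlip.fixedPoint f with hp
  have hfp : f p = p := hlip.fixedPoint_isFixedPt
  have hTp : T p = p := by
    have h1 : lam • (T p - p) = 0 := by
      have := hfp
      simp only [hf] at this
      have : lam • T p - lam • p = 0 := by
        rw [sub_eq_zero]
        have h2 : (1 - lam) • p + lam • T p = p := this
        have : lam • T p = p - (1 - lam) • p := by linear_combination (norm := module) h2
        rw [this]; module
      rw [smul_sub]; exact this
    have := smul_eq_zero.mp h1
    rcases this with h | h
    · exact absurd h hlam0.ne'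
    · exact sub_eq_zero.mp h
  refine ⟨p, ?_⟩
  have hiter : ∀ n, T^[n] p = p := fun n => Function.iterate_fixed hTp n
  simp only [hiter]
  -- bound : ‖p - u n‖ ≤ (lam / (1 - c)) * ‖u n - T (u n)‖
  have hbound : ∀ n, ‖p - u n‖ ≤ (lam / (1 - c)) * ‖u n - T (u n)‖ := by
    intro n
    have h1 : ‖u n - f (u n)‖ = lam * ‖u n - T (u n)‖ := by
      have : u n - f (u n) = lam • (u n - T (u n)) := by
        simp only [hf]; module
      rw [this, norm_smul, Real.norm_eq_abs, abs_of_pos hlam0]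
    have h2 : ‖u n - p‖ ≤ ‖u n - f (u n)‖ + ‖f (u n) - p‖ := norm_sub_le_norm_sub_add_norm_sub _ _ _
    have h3 : ‖f (u n) - p‖ ≤ c * ‖u n - p‖ := by
      calc ‖f (u n) - p‖ = ‖f (u n) - f p‖ := by rw [hfp]
        _ ≤ c * ‖u n - p‖ := hcontr _ _
    have h4 : (1 - c) * ‖u n - p‖ ≤ lam * ‖u n - T (u n)‖ := by nlinarith [h2, h3, h1]
    have h5 : 0 < 1 - c := by linarith
    rw [norm_sub_rev]
    rw [div_mul_eq_mul_div, le_div_iff₀ h5]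
    nlinarith [h4]
  have hlim : Filter.Tendsto (fun n => (lam / (1 - c)) * ‖u n - T (u n)‖)
      Filter.atTop (nhds 0) := by
    have := hu.const_mul (lam / (1 - c))
    simpa using this
  exact squeeze_zero (fun n => norm_nonneg _) hbound hlim
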